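/- Define g(a,b) = (b+1)(b+2)(b+3)(b+4)(b+5)(7a² - 7ab + 2b² + 21a - 9b + 14)/(14·5!). If a ≥ b ≥ 0 are integers, then the coefficient c(a,b) of q₁^a q₂^b in 1/((1-q₁)³(1-q₂)³(1-q₁q₂)³) equals g(a,b). -/
import Mathlib

/-- The set of triples of naturals with sum `n`. -/
abbrev K (n : ℕ) : Type := {f : Fin 3 → ℕ // ∑ s, f s = n}

/-- Decompose `K n` according to `f 1 + f 2`. -/
def eK (n : ℕ) : K n ≃ Σ m : Fin (n + 1), {p : ℕ × ℕ // p.1 + p.2 = (m : ℕ)} where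
  toFun f := ⟨⟨f.1 1 + f.1 2, by
      have := f.2; rw [Fin.sum_univ_three] at this; omega⟩, ⟨(f.1 1, f.1 2), rfl⟩⟩
  invFun p := ⟨![n - (p.1 : ℕ), p.2.1.1, p.2.1.2], by
      have h1 : (p.1 : ℕ) < n + 1 := p.1.2
      have h2 := p.2.2
      rw [Fin.sum_univ_three]
      simp only [Matrix.cons_val_zero, Matrix.cons_val_one, Matrix.head_cons,
        Matrix.cons_val_two, Matrix.tail_cons]
      omega⟩
  left_inv f := by
    obtain ⟨f, hf⟩ := f
    rw [Fin.sum_univ_three] at hf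
    apply Subtype.ext
    funext s
    fin_cases s <;> simp <;> omega
  right_inv p := by
    obtain ⟨⟨m, hm⟩, ⟨⟨x, y⟩, hxy⟩⟩ := p
    simp only at hxy
    subst hxy
    rfl

/-- Pairs of naturals with sum `m` biject with `Fin (m+1)`. -/
def ePair (m : ℕ) : {p : ℕ × ℕ // p.1 + p.2 = m} ≃ Fin (m + 1) where
  toFun p := ⟨p.1.1, by have := p.2; omega⟩
  invFun x := ⟨(x, m - x), by have := x.2; omega⟩
  left_inv p := by
    obtain ⟨⟨x, y⟩, h⟩ := p
    apply Subtype.ext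
    simp only at h ⊢
    exact Prod.ext rfl (by omega)
  right_inv x := rfl

noncomputable instance (n : ℕ) : Fintype (K n) :=
  Fintype.ofEquiv _ ((eK n).trans (Equiv.sigmaCongrRight fun m => ePair m)).symm

lemma cardK (n : ℕ) : 2 * Nat.card (K n) = (n + 1) * (n + 2) := by
  have h : Nat.card (K n) = ∑ m ∈ Finset.range (n + 1), (m + 1) := by
    rw [Nat.card_congr ((eK n).trans (Equiv.sigmaCongrRight fun m => ePair m))]
    rw [Nat.card_eq_fintype_card, Fintype.card_sigma]
    simp only [Fintype.card_fin]
    exact Fin.sum_univ_eq_sum_range (fun m => m + 1) (n + 1)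
  rw [h]
  have h2 : ∀ k : ℕ, 2 * ∑ m ∈ Finset.range (k + 1), (m + 1) = (k + 1) * (k + 2) := by
    intro k
    induction k with
    | zero => simp
    | succ k ih => rw [Finset.sum_range_succ, Nat.mul_add, ih]; ring
  exact h2 n

lemma castK (n : ℕ) : (Nat.card (K n) : ℚ) = ((n : ℚ) + 1) * ((n : ℚ) + 2) / 2 := by
  have := cardK n
  have : (2 : ℚ) * Nat.card (K n) = ((n : ℚ) + 1) * ((n : ℚ) + 2) := by
    exact_mod_cast congrArg (Nat.cast : ℕ → ℚ) this
  linarith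

/-- `c a b` is the number of 9-tuples of nonnegative integers
`(i₁,i₂,i₃,j₁,j₂,j₃,k₁,k₂,k₃)` with `∑ i + ∑ k = a` and `∑ j + ∑ k = b`, i.e. the
coefficient of `q₁^a q₂^b` in `1/((1-q₁)³(1-q₂)³(1-q₁q₂)³)`. -/
noncomputable def c (a b : ℕ) : ℕ :=
  Nat.card {t : (Fin 3 → ℕ) × (Fin 3 → ℕ) × (Fin 3 → ℕ) //
    (∑ s, t.1 s) + (∑ s, t.2.2 s) = a ∧ (∑ s, t.2.1 s) + (∑ s, t.2.2 s) = b}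

/-- The polynomial `g`. -/
def g (a b : ℚ) : ℚ :=
  (b + 1) * (b + 2) * (b + 3) * (b + 4) * (b + 5) *
    (7 * a ^ 2 - 7 * a * b + 2 * b ^ 2 + 21 * a - 9 * b + 14) /
      (14 * Nat.factorial 5)

/-- Decompose the tuples counted by `c a b` according to `∑ k`. -/
def eC (a b : ℕ) (hba : b ≤ a) :
    {t : (Fin 3 → ℕ) × (Fin 3 → ℕ) × (Fin 3 → ℕ) //
      (∑ s, t.1 s) + (∑ s, t.2.2 s) = a ∧ (∑ s, t.2.1 s) + (∑ s, t.2.2 s) = b} ≃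
    Σ m : Fin (b + 1), K (m : ℕ) × K (a - (m : ℕ)) × K (b - (m : ℕ)) where
  toFun t := ⟨⟨∑ s, t.1.2.2 s, by have := t.2.2; omega⟩,
    ⟨t.1.2.2, rfl⟩, ⟨t.1.1, by have := t.2.1; simp only [Fin.val_mk]; omega⟩,
    ⟨t.1.2.1, by have := t.2.2; simp only [Fin.val_mk]; omega⟩⟩
  invFun p := ⟨(p.2.2.1.1, p.2.2.2.1, p.2.1.1), by
    have h1 : (p.1 : ℕ) < b + 1 := p.1.2
    have hk := p.2.1.2
    have hi := p.2.2.1.2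
    have hj := p.2.2.2.2
    have hb := hba
    dsimp only
    constructor <;> omega⟩
  left_inv t := by
    obtain ⟨⟨i, j, k⟩, h1, h2⟩ := t
    rfl
  right_inv p := by
    obtain ⟨⟨m, hm⟩, ⟨k, hk⟩, ⟨i, hi⟩, ⟨j, hj⟩⟩ := p
    simp only at hk
    subst hk
    rfl

lemma c_eq_sum (a b : ℕ) (hba : b ≤ a) :
    c a b = ∑ m ∈ Finset.range (b + 1),
      Nat.card (K m) * Nat.card (K (a - m)) * Nat.card (K (b - m)) := by
  rw [c, Nat.card_congr (eC a b hba), Nat.card_eq_fintype_card, Fintype.card_sigma]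
  rw [Fin.sum_univ_eq_sum_range
    (fun m => Fintype.card (K m × K (a - m) × K (b - m))) (b + 1)]
  refine Finset.sum_congr rfl fun m _ => ?_
  simp [Fintype.card_prod, Nat.card_eq_fintype_card, mul_assoc]

/-- Sums of powers up to 6 over `range n`. -/
lemma sum_pow_poly (n : ℕ) (c0 c1 c2 c3 c4 c5 c6 : ℚ) :
    ∑ m ∈ Finset.range n, (c0 + c1 * (m : ℚ) + c2 * (m : ℚ) ^ 2 + c3 * (m : ℚ) ^ 3
        + c4 * (m : ℚ) ^ 4 + c5 * (m : ℚ) ^ 5 + c6 * (m : ℚ) ^ 6)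
      = c0 * n + c1 * ((n : ℚ) * (n - 1) / 2) + c2 * ((n : ℚ) * (n - 1) * (2 * n - 1) / 6)
        + c3 * ((n : ℚ) * (n - 1) / 2) ^ 2
        + c4 * ((n : ℚ) * (n - 1) * (2 * n - 1) * (3 * (n : ℚ) ^ 2 - 3 * n - 1) / 30)
        + c5 * ((n : ℚ) ^ 2 * (n - 1) ^ 2 * (2 * (n : ℚ) ^ 2 - 2 * n - 1) / 12)
        + c6 * ((n : ℚ) * (n - 1) * (2 * n - 1)
            * (3 * (n : ℚ) ^ 4 - 6 * (n : ℚ) ^ 3 + 3 * n + 1) / 42) := by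
  induction n with
  | zero => simp
  | succ k ih => rw [Finset.sum_range_succ, ih]; push_cast; ring

theorem coeff_eq_g (a b : ℕ) (hba : b ≤ a) : (c a b : ℚ) = g a b := by
  have hsum := c_eq_sum a b hba
  have hcast : (c a b : ℚ) = ∑ m ∈ Finset.range (b + 1),
      (((m : ℚ) + 1) * ((m : ℚ) + 2) / 2) * (((a : ℚ) - m + 1) * ((a : ℚ) - m + 2) / 2)
        * (((b : ℚ) - m + 1) * ((b : ℚ) - m + 2) / 2) := by
    rw [hsum]
    push_cast
    refine Finset.sum_congr rfl fun m hm => ?_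
    rw [Finset.mem_range] at hm
    have hmb : m ≤ b := by omega
    have hma : m ≤ a := le_trans hmb hba
    rw [castK, castK, castK]
    rw [Nat.cast_sub hma, Nat.cast_sub hmb]
  rw [hcast]
  set A := (a : ℚ)
  set B := (b : ℚ)
  have key : ∀ m ∈ Finset.range (b + 1),
      (((m : ℚ) + 1) * ((m : ℚ) + 2) / 2) * ((A - m + 1) * (A - m + 2) / 2)
        * ((B - m + 1) * (B - m + 2) / 2)
      = (1 + 3/2*B + 1/2*B^2 + 3/2*A + 9/4*A*B + 3/4*A*B^2 + 1/2*A^2 + 3/4*A^2*B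
            + 1/4*A^2*B^2)
        + (-3/2 - B - A + 3/8*A*B + 5/8*A*B^2 + 5/8*A^2*B + 3/8*A^2*B^2) * (m : ℚ)
        + (-3/4 - 15/8*B - 5/8*B^2 - 15/8*A - 19/8*A*B - 3/8*A*B^2 - 5/8*A^2 - 3/8*A^2*B
            + 1/8*A^2*B^2) * (m : ℚ) ^ 2
        + (15/8 + 5/4*B + 5/4*A - 1/4*A*B^2 - 1/4*A^2*B) * (m : ℚ) ^ 3
        + (-3/8 + 3/8*B + 1/8*B^2 + 3/8*A + 1/2*A*B + 1/8*A^2) * (m : ℚ) ^ 4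
        + (-3/8 - 1/4*B - 1/4*A) * (m : ℚ) ^ 5
        + (1/8) * (m : ℚ) ^ 6 := by
    intro m _
    ring
  rw [Finset.sum_congr rfl key, sum_pow_poly]
  have hB : ((b + 1 : ℕ) : ℚ) = B + 1 := by push_cast; ring
  rw [hB, g]
  have h5 : ((Nat.factorial 5 : ℕ) : ℚ) = 120 := by norm_num [Nat.factorial]
  rw [h5]
  ring
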